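/- Let 0 < ℵ < 1, b > 0, and ℓ ∈ {0,1,…,6}. There is a constant C depending only on b and ℓ such that for all n ≥ 1 and all complex κ with |Im κ| < ℵ^n·b, |χ_n(κ) − χ_{n+1}(κ)| ≤ C·|ℵ^{−n}κ|^ℓ·exp(−½|ℵ^{−n}κ|^6), where χ_n(κ) = exp(−(ℵ^{−n}κ)^6). -/

import Mathlib

noncomputable def chiC (al : ℝ) (n : ℕ) (κ : ℂ) : ℂ :=
  if n = 0 then 1 else Complex.exp (-(((al⁻¹ ^ n : ℝ) : ℂ) * κ) ^ 6)

lemma aux1 (s B : ℝ) (hs : 0 ≤ s) (hB : 0 ≤ B) : 18 * s^2 * B ≤ s^3/4 + 13824*B^3 := by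
  nlinarith [mul_nonneg (sq_nonneg (s - 48*B)) (by linarith : (0:ℝ) ≤ s + 24*B)]

lemma re_bound (z : ℂ) (b : ℝ) (hb : 0 ≤ b) (him : |z.im| ≤ b) :
    (3/4) * ‖z‖^6 - 13826 * b^6 ≤ (z^6).re := by
  have hy : z.im^2 ≤ b^2 := by nlinarith [abs_nonneg z.im, sq_abs z.im]
  have hre : (z^6).re = z.re^6 - 15*z.re^4*z.im^2 + 15*z.re^2*z.im^4 - z.im^6 := by
    simp [pow_succ, Complex.mul_re, Complex.mul_im]
    ring
  have hnorm : ‖z‖^6 = (z.re^2 + z.im^2)^3 := by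
    have h2 : ‖z‖^2 = z.re^2 + z.im^2 := by
      rw [Complex.sq_norm, Complex.normSq_apply]; ring
    calc ‖z‖^6 = (‖z‖^2)^3 := by ring
    _ = (z.re^2 + z.im^2)^3 := by rw [h2]
  rw [hre, hnorm]
  set x := z.re; set y := z.im
  have h1 := aux1 (x^2+y^2) (b^2) (by positivity) (by positivity)
  have h2 : (x^2+y^2)^2 * y^2 ≤ (x^2+y^2)^2 * b^2 :=
    mul_le_mul_of_nonneg_left hy (by positivity)
  nlinarith [sq_nonneg (x*y^2), sq_nonneg (y^3), sq_nonneg y, pow_nonneg hb 6, sq_nonneg (y*b)]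

lemma poly_exp_bound (t S : ℝ) (hS : 0 ≤ S) (_ht0 : 0 ≤ t) (h : t ≤ 1 + S) :
    t * Real.exp (-(3/4)*S) ≤ 5 * Real.exp (-(1/2)*S) := by
  have key : t * Real.exp (-(1/4)*S) ≤ 5 := by
    have h1 : 1 + S ≤ 5 * Real.exp ((1/4)*S) := by
      nlinarith [Real.add_one_le_exp ((1/4)*S)]
    have h2 : Real.exp (-(1/4)*S) = (Real.exp ((1/4)*S))⁻¹ := by
      rw [← Real.exp_neg]; ring_nf
    have hpos : 0 < Real.exp ((1/4)*S) := Real.exp_pos _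
    rw [h2]
    rw [mul_inv_le_iff₀ hpos]
    calc t ≤ 1 + S := h
    _ ≤ 5 * Real.exp ((1/4)*S) := h1
  have hsplit : Real.exp (-(3/4)*S) = Real.exp (-(1/4)*S) * Real.exp (-(1/2)*S) := by
    rw [← Real.exp_add]; ring_nf
  rw [hsplit]
  calc t * (Real.exp (-(1/4)*S) * Real.exp (-(1/2)*S))
      = (t * Real.exp (-(1/4)*S)) * Real.exp (-(1/2)*S) := by ring
  _ ≤ 5 * Real.exp (-(1/2)*S) :=
      mul_le_mul_of_nonneg_right key (Real.exp_pos _).le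

/-- For `0 < ℵ < 1`, `b > 0` and `ℓ ≤ 6` there is a constant `C = C(b,ℓ)` such that for
all `n ≥ 1` and `|Im κ| < ℵⁿ b`,
`|χ_n(κ) - χ_{n+1}(κ)| ≤ C |ℵ^{-n}κ|^ℓ exp(-½|ℵ^{-n}κ|⁶)`. -/
theorem chi_difference_bound (al b : ℝ) (hal : 0 < al) (hal1 : al < 1) (hb : 0 < b)
    (ℓ : ℕ) (hℓ : ℓ ≤ 6) :
    ∃ C > 0, ∀ n : ℕ, 1 ≤ n → ∀ κ : ℂ, |κ.im| < al ^ n * b →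
      ‖chiC al n κ - chiC al (n + 1) κ‖
        ≤ C * ‖((al⁻¹ ^ n : ℝ) : ℂ) * κ‖ ^ ℓ
            * Real.exp (-(1 / 2) * ‖((al⁻¹ ^ n : ℝ) : ℂ) * κ‖ ^ 6) := by
  have hinv : 1 < al⁻¹ := one_lt_inv₀ hal |>.mpr hal1
  set a : ℝ := al⁻¹ ^ 6 with ha_def
  have ha : 1 < a := one_lt_pow₀ hinv (by norm_num)
  set K : ℝ := 13826 * b ^ 6 with hK_def
  have hK : 0 ≤ K := by positivity
  refine ⟨5 * (a - 1) * Real.exp (a * K), by have := Real.exp_pos (a * K); nlinarith, ?_⟩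
  intro n hn κ him
  set z : ℂ := ((al⁻¹ ^ n : ℝ) : ℂ) * κ with hz_def
  -- |Im z| ≤ b
  have hzim : |z.im| ≤ b := by
    have h1 : z.im = al⁻¹ ^ n * κ.im := by
      rw [hz_def]
      rw [Complex.mul_im, Complex.ofReal_re, Complex.ofReal_im]
      ring
    have h2 : (0:ℝ) < al⁻¹ ^ n := by positivity
    rw [h1, abs_mul, abs_of_pos h2]
    have h3 : al⁻¹ ^ n * |κ.im| ≤ al⁻¹ ^ n * (al ^ n * b) :=
      mul_le_mul_of_nonneg_left him.le h2.le
    have h4 : al⁻¹ ^ n * (al ^ n * b) = b := by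
      rw [← mul_assoc, ← mul_pow, inv_mul_cancel₀ hal.ne', one_pow, one_mul]
    linarith
  set S : ℝ := ‖z‖ ^ 6 with hS_def
  have hS : 0 ≤ S := by positivity
  set w : ℂ := -z ^ 6 with hw_def
  have hwnorm : ‖w‖ = S := by rw [hw_def, norm_neg, norm_pow]
  have hwre : w.re ≤ K - (3/4) * S := by
    have := re_bound z b hb.le hzim
    have : (3/4) * S - K ≤ (z^6).re := this
    rw [hw_def]
    simp only [Complex.neg_re]
    linarith
  -- chiC values
  have hchi_n : chiC al n κ = Complex.exp ((1:ℂ) * w) := by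
    rw [chiC, if_neg (by omega : n ≠ 0), hw_def, hz_def]; ring_nf
  have hchi_n1 : chiC al (n+1) κ = Complex.exp ((a:ℂ) * w) := by
    rw [chiC, if_neg (by omega : n + 1 ≠ 0), hw_def, hz_def, ha_def]
    push_cast
    ring_nf
  -- derivative bound
  set D : ℝ := S * Real.exp (a * K - (3/4) * S) with hD_def
  have key : ∀ t ∈ Set.Icc (1:ℝ) a,
      HasDerivAt (fun t : ℝ => Complex.exp ((t:ℂ) * w)) (Complex.exp ((t:ℂ)*w) * w) t := by
    intro t _
    have h1 : HasDerivAt (fun t : ℝ => (t:ℂ)) 1 t := Complex.ofRealCLM.hasDerivAt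
    simpa using (h1.mul_const w).cexp
  have bound : ∀ t ∈ Set.Icc (1:ℝ) a, ‖Complex.exp ((t:ℂ)*w) * w‖ ≤ D := by
    intro t ht
    rw [norm_mul, hwnorm, Complex.norm_exp]
    have hre : ((t:ℂ) * w).re = t * w.re := by
      simp [Complex.mul_re]
    rw [hre, hD_def]
    have hexp : t * w.re ≤ a * K - (3/4) * S := by
      rcases le_or_gt w.re 0 with h | h
      · have h1 : t * w.re ≤ 1 * w.re :=
          mul_le_mul_of_nonpos_right ht.1 h
        nlinarith [mul_nonneg (by linarith : (0:ℝ) ≤ a - 1) hK]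
      · have h1 : t * w.re ≤ a * w.re :=
          mul_le_mul_of_nonneg_right ht.2 h.le
        have h2 : a * w.re ≤ a * (K - (3/4) * S) :=
          mul_le_mul_of_nonneg_left hwre (by linarith)
        nlinarith [mul_nonneg (by linarith : (0:ℝ) ≤ a - 1) hS]
    calc Real.exp (t * w.re) * S ≤ Real.exp (a * K - (3/4) * S) * S :=
      mul_le_mul_of_nonneg_right (Real.exp_le_exp.mpr hexp) hS
    _ = S * Real.exp (a * K - (3/4) * S) := by ring
  have mvt := (convex_Icc (1:ℝ) a).norm_image_sub_le_of_norm_hasDerivWithin_le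
    (fun t ht => (key t ht).hasDerivWithinAt) bound
    (Set.left_mem_Icc.mpr ha.le) (Set.right_mem_Icc.mpr ha.le)
  have hmain : ‖chiC al n κ - chiC al (n+1) κ‖ ≤ D * (a - 1) := by
    rw [hchi_n, hchi_n1, norm_sub_rev]
    calc ‖Complex.exp ((a:ℂ)*w) - Complex.exp ((1:ℂ)*w)‖ ≤ D * ‖a - 1‖ := mvt
    _ = D * (a - 1) := by rw [Real.norm_eq_abs, abs_of_pos (by linarith)]
  refine hmain.trans ?_
  -- final arithmetic
  have hsplit : Real.exp (a * K - (3/4) * S) = Real.exp (a*K) * Real.exp (-(3/4)*S) := by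
    rw [← Real.exp_add]; ring_nf
  have hSfac : S = ‖z‖ ^ ℓ * ‖z‖ ^ (6 - ℓ) := by
    rw [hS_def, ← pow_add]
    congr 1
    omega
  have hzle : ‖z‖ ^ (6 - ℓ) ≤ 1 + S := by
    rcases le_or_gt ‖z‖ 1 with h | h
    · have := pow_le_one₀ (norm_nonneg z) h (n := 6 - ℓ)
      linarith
    · have h1 : ‖z‖ ^ (6 - ℓ) ≤ ‖z‖ ^ 6 :=
        pow_le_pow_right₀ h.le (by omega)
      rw [hS_def]; linarith
  have hpb := poly_exp_bound (‖z‖ ^ (6 - ℓ)) S hS (by positivity) hzle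
  calc D * (a - 1) = (a - 1) * Real.exp (a*K) * (‖z‖ ^ ℓ *
        (‖z‖ ^ (6 - ℓ) * Real.exp (-(3/4)*S))) := by
        rw [hD_def, hsplit, hSfac]; ring
  _ ≤ (a - 1) * Real.exp (a*K) * (‖z‖ ^ ℓ * (5 * Real.exp (-(1/2)*S))) := by
      apply mul_le_mul_of_nonneg_left _ (mul_nonneg (by linarith) (Real.exp_pos _).le)
      exact mul_le_mul_of_nonneg_left hpb (by positivity)
  _ = 5 * (a - 1) * Real.exp (a * K) * ‖z‖ ^ ℓ * Real.exp (-(1/2) * S) := by ring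
  _ = 5 * (a - 1) * Real.exp (a * K) * ‖((al⁻¹ ^ n : ℝ) : ℂ) * κ‖ ^ ℓ
        * Real.exp (-(1 / 2) * ‖((al⁻¹ ^ n : ℝ) : ℂ) * κ‖ ^ 6) := by
      rw [hS_def, hz_def]
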